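/- Let m be even, y an integer with y ≥ 16 and y ≤ m/2, and T ~ Binomial(m/2 + y, 2y/(m + 2y)), so E[T] = y. Then P(T = y) ≤ 2/(1 + 2⌊y^{1/4}⌋), and consequently P(|T - y| ≤ y^{1/10}) < 3·y^{-3/20}. -/

import Mathlib

open scoped Classical
open Finset

namespace Stmt16

noncomputable def F (c y k : ℕ) : ℝ :=
  ((c+y).choose k : ℝ) * ((y:ℝ)/((c:ℝ)+y))^k * ((c:ℝ)/((c:ℝ)+y))^((c+y)-k)

lemma F_nonneg (c y k : ℕ) : 0 ≤ F c y k := by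
  unfold F; positivity

lemma F_sum (c y : ℕ) (hy : 0 < y) :
    ∑ k ∈ range (c+y+1), F c y k = 1 := by
  have hN : (0:ℝ) < (c:ℝ)+y := by
    have : (0:ℝ) < (y:ℝ) := by exact_mod_cast hy
    positivity
  have h : ((y:ℝ)/((c:ℝ)+y)) + ((c:ℝ)/((c:ℝ)+y)) = 1 := by field_simp; ring
  have hb := add_pow ((y:ℝ)/((c:ℝ)+y)) ((c:ℝ)/((c:ℝ)+y)) (c+y)
  rw [h, one_pow] at hb
  rw [hb]
  apply Finset.sum_congr rfl
  intro k hk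
  unfold F
  ring

lemma F_step (c y k : ℕ) (hk : k < c + y) :
    F c y (k+1) * (((k:ℝ)+1) * c) = F c y k * (((c+y-k : ℕ) : ℝ) * y) := by
  obtain ⟨d, hd⟩ : ∃ d, c + y = k + 1 + d := ⟨c+y-(k+1), by omega⟩
  have h1 : c + y - k = d + 1 := by omega
  have h2 : c + y - (k+1) = d := by omega
  have hch : ((c+y).choose (k+1) : ℝ) * ((k:ℝ)+1) = ((c+y).choose k : ℝ) * ((d:ℝ)+1) := by
    have h := Nat.choose_succ_right_eq (c+y) k
    rw [h1] at h
    exact_mod_cast h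
  have hN : (0:ℝ) < (c:ℝ)+y := by
    have : (0:ℕ) < c+y := by omega
    exact_mod_cast this
  have hPQ : (y:ℝ)/((c:ℝ)+y) * c = (c:ℝ)/((c:ℝ)+y) * y := by
    field_simp
  unfold F
  rw [h1, h2, pow_succ, pow_succ]
  push_cast
  linear_combination (((y:ℝ)/((c:ℝ)+y))^k * (((c:ℝ)/((c:ℝ)+y))^d) * ((y:ℝ)/((c:ℝ)+y)) * (c:ℝ)) * hch
    + (((y:ℝ)/((c:ℝ)+y))^k * (((c:ℝ)/((c:ℝ)+y))^d) * ((c+y).choose k : ℝ) * ((d:ℝ)+1)) * hPQ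

lemma mono_up (c y k : ℕ) (hyc : y ≤ c) (hk : k < y) : F c y k ≤ F c y (k+1) := by
  have hk' : k < c + y := by omega
  have hs := F_step c y k hk'
  have hU : (0:ℝ) < ((k:ℝ)+1) * c := by
    have hc : (0:ℝ) < (c:ℝ) := by exact_mod_cast (by omega : (0:ℕ) < c)
    positivity
  have hV : ((k:ℝ)+1) * c ≤ ((c+y-k : ℕ) : ℝ) * y := by
    have h1 : (k+1) * c ≤ (c+y-k) * y := by
      have h2 : c + 1 ≤ c + y - k := by omega
      calc (k+1)*c ≤ y*c := Nat.mul_le_mul_right c (by omega)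
        _ ≤ (c+1)*y := by nlinarith
        _ ≤ (c+y-k)*y := Nat.mul_le_mul_right y h2
    calc ((k:ℝ)+1) * c = (((k+1)*c : ℕ) : ℝ) := by push_cast; ring
      _ ≤ (((c+y-k)*y : ℕ) : ℝ) := by exact_mod_cast h1
      _ = ((c+y-k : ℕ) : ℝ) * y := by push_cast; ring
  have hF := F_nonneg c y k
  have h3 : F c y k * (((k:ℝ)+1) * c) ≤ F c y (k+1) * (((k:ℝ)+1) * c) := by
    rw [hs]
    exact mul_le_mul_of_nonneg_left hV hF
  exact le_of_mul_le_mul_right h3 hU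

lemma mono_down (c y k : ℕ) (hy : 0 < y) (hyc : y ≤ c) (hk : y ≤ k) :
    F c y (k+1) ≤ F c y k := by
  by_cases hk' : k < c + y
  · have hs := F_step c y k hk'
    have hU : (0:ℝ) < ((k:ℝ)+1) * c := by
      have hc : (0:ℝ) < (c:ℝ) := by exact_mod_cast (by omega : (0:ℕ) < c)
      positivity
    have hV : ((c+y-k : ℕ) : ℝ) * y ≤ ((k:ℝ)+1) * c := by
      have h1 : (c+y-k) * y ≤ (k+1) * c := by
        have h2 : c + y - k ≤ c := by omega
        calc (c+y-k)*y ≤ c*y := Nat.mul_le_mul_right y h2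
          _ ≤ (k+1)*c := by nlinarith
      calc ((c+y-k : ℕ) : ℝ) * y = (((c+y-k)*y : ℕ) : ℝ) := by push_cast; ring
        _ ≤ (((k+1)*c : ℕ) : ℝ) := by exact_mod_cast h1
        _ = ((k:ℝ)+1) * c := by push_cast; ring
    have hF := F_nonneg c y k
    have h3 : F c y (k+1) * (((k:ℝ)+1) * c) ≤ F c y k * (((k:ℝ)+1) * c) := by
      rw [hs]
      exact mul_le_mul_of_nonneg_left hV hF
    exact le_of_mul_le_mul_right h3 hU
  · have h0 : (c+y).choose (k+1) = 0 := Nat.choose_eq_zero_of_lt (by omega)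
    have h1 : F c y (k+1) = 0 := by unfold F; rw [h0]; simp
    rw [h1]; exact F_nonneg c y k

lemma F_max (c y : ℕ) (hy : 0 < y) (hyc : y ≤ c) (k : ℕ) : F c y k ≤ F c y y := by
  have up : ∀ i, F c y (y - i) ≤ F c y y := by
    intro i
    induction i with
    | zero => simp
    | succ n ih =>
      rcases le_or_gt (n+1) y with h | h
      · have h1 : y - (n+1) < y := by omega
        have h2 : y - (n+1) + 1 = y - n := by omega
        calc F c y (y-(n+1)) ≤ F c y (y-(n+1)+1) := mono_up c y _ hyc h1
          _ = F c y (y - n) := by rw [h2]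
          _ ≤ F c y y := ih
      · have h2 : y - (n+1) = y - n := by omega
        rw [h2]; exact ih
  have down : ∀ i, F c y (y + i) ≤ F c y y := by
    intro i
    induction i with
    | zero => simp
    | succ n ih =>
      calc F c y (y+(n+1)) = F c y ((y+n)+1) := by ring_nf
        _ ≤ F c y (y+n) := mono_down c y _ hy hyc (by omega)
        _ ≤ F c y y := ih
  rcases le_or_gt k y with h | h
  · have h1 : k = y - (y - k) := by omega
    rw [h1]; exact up _
  · have h1 : k = y + (k - y) := by omega
    rw [h1]; exact down _

lemma ratio_up (c y b j : ℕ) (hyc : y ≤ c) (hby : b ≤ y) (hj : j < b) :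
    (1 - (b:ℝ)/y)^2 * F c y (y+j) ≤ F c y (y+j+1) := by
  have hy : 0 < y := by omega
  have hyR : (0:ℝ) < y := by exact_mod_cast hy
  have hcR : (0:ℝ) < c := by exact_mod_cast (by omega : 0 < c)
  have hbR : (b:ℝ) ≤ y := by exact_mod_cast hby
  have hycR : (y:ℝ) ≤ c := by exact_mod_cast hyc
  have hjR : (j:ℝ) + 1 ≤ b := by exact_mod_cast hj
  have ht0 : (0:ℝ) ≤ 1 - (b:ℝ)/y := by
    rw [sub_nonneg, div_le_one hyR]; exact hbR
  have heq : (1 - (b:ℝ)/y) = ((y:ℝ)-b)/y := by field_simp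
  have hk' : y + j < c + y := by omega
  have hs := F_step c y (y+j) hk'
  have hcast : ((c + y - (y+j) : ℕ) : ℝ) = (c:ℝ) - j := by
    have h1 : c + y - (y+j) = c - j := by omega
    rw [h1, Nat.cast_sub (by omega : j ≤ c)]
  rw [hcast] at hs
  have hU : (0:ℝ) < (((y:ℕ):ℝ)+(j:ℝ)+1) * c := by positivity
  have A1 : (1 - (b:ℝ)/y) * ((y:ℝ)+j+1) ≤ y := by
    rw [heq, div_mul_eq_mul_div, div_le_iff₀ hyR]
    nlinarith
  have A2 : (1 - (b:ℝ)/y) * c ≤ (c:ℝ) - j := by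
    rw [heq, div_mul_eq_mul_div, div_le_iff₀ hyR]
    nlinarith
  have key : (1 - (b:ℝ)/y)^2 * (((y:ℝ)+j+1) * c) ≤ ((c:ℝ) - j) * y := by
    nlinarith [mul_le_mul A1 A2 (by positivity) (le_of_lt hyR)]
  have hF := F_nonneg c y (y+j)
  have hcast2 : (((y+j:ℕ):ℝ)+1) = ((y:ℕ):ℝ)+(j:ℝ)+1 := by push_cast; ring
  rw [hcast2] at hs
  have step2 : (1 - (b:ℝ)/y)^2 * F c y (y+j) * ((((y:ℕ):ℝ)+(j:ℝ)+1) * c)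
      ≤ F c y (y+j+1) * ((((y:ℕ):ℝ)+(j:ℝ)+1) * c) := by
    rw [hs]
    calc (1 - (b:ℝ)/y)^2 * F c y (y+j) * ((((y:ℕ):ℝ)+(j:ℝ)+1) * c)
        = F c y (y+j) * ((1 - (b:ℝ)/y)^2 * ((((y:ℕ):ℝ)+(j:ℝ)+1) * c)) := by ring
      _ ≤ F c y (y+j) * (((c:ℝ) - j) * y) := mul_le_mul_of_nonneg_left key hF
  exact le_of_mul_le_mul_right step2 hU

lemma ratio_down (c y b j : ℕ) (hyc : y ≤ c) (hby : b ≤ y) (hj : j < b) :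
    (1 - (b:ℝ)/y)^2 * F c y (y-j) ≤ F c y (y-(j+1)) := by
  have hy : 0 < y := by omega
  have hyR : (0:ℝ) < y := by exact_mod_cast hy
  have hcR : (0:ℝ) < c := by exact_mod_cast (by omega : 0 < c)
  have hbR : (b:ℝ) ≤ y := by exact_mod_cast hby
  have hycR : (y:ℝ) ≤ c := by exact_mod_cast hyc
  have hjR : (j:ℝ) + 1 ≤ b := by exact_mod_cast hj
  have ht0 : (0:ℝ) ≤ 1 - (b:ℝ)/y := by
    rw [sub_nonneg, div_le_one hyR]; exact hbR
  have heq : (1 - (b:ℝ)/y) = ((y:ℝ)-b)/y := by field_simp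
  have hk' : y - (j+1) < c + y := by omega
  have hs := F_step c y (y-(j+1)) hk'
  have h1 : y - (j+1) + 1 = y - j := by omega
  rw [h1] at hs
  have hcast : ((c + y - (y-(j+1)) : ℕ) : ℝ) = (c:ℝ) + j + 1 := by
    have h2 : c + y - (y-(j+1)) = c + j + 1 := by omega
    rw [h2]; push_cast; ring
  rw [hcast] at hs
  have hcast2 : (((y-(j+1):ℕ):ℝ)+1) = (y:ℝ) - j := by
    rw [Nat.cast_sub (by omega : j+1 ≤ y)]; push_cast; ring
  rw [hcast2] at hs
  have hU : (0:ℝ) < ((c:ℝ)+j+1) * y := by positivity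
  have B1 : (1 - (b:ℝ)/y) * ((c:ℝ)+j+1) ≤ c := by
    rw [heq, div_mul_eq_mul_div, div_le_iff₀ hyR]
    nlinarith
  have B2 : (1 - (b:ℝ)/y) * y ≤ (y:ℝ) - j := by
    rw [heq, div_mul_eq_mul_div, div_le_iff₀ hyR]
    nlinarith
  have key : (1 - (b:ℝ)/y)^2 * (((c:ℝ)+j+1) * y) ≤ ((y:ℝ) - j) * c := by
    nlinarith [mul_le_mul B1 B2 (by positivity) (le_of_lt hcR)]
  have hF := F_nonneg c y (y-j)
  have step2 : (1 - (b:ℝ)/y)^2 * F c y (y-j) * (((c:ℝ)+j+1) * y)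
      ≤ F c y (y-(j+1)) * (((c:ℝ)+j+1) * y) := by
    calc (1 - (b:ℝ)/y)^2 * F c y (y-j) * (((c:ℝ)+j+1) * y)
        = F c y (y-j) * ((1 - (b:ℝ)/y)^2 * (((c:ℝ)+j+1) * y)) := by ring
      _ ≤ F c y (y-j) * (((y:ℝ) - j) * c) := mul_le_mul_of_nonneg_left key hF
      _ = F c y (y-j) * (((y:ℝ)-j) * c) := by ring
      _ = F c y (y-(j+1)) * (((c:ℝ)+j+1) * y) := hs
  exact le_of_mul_le_mul_right step2 hU

lemma pow312 (b : ℕ) (hb : 2 ≤ b) : (b+1)^12 ≤ b^20 := by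
  have h3 : (b+1)^3 ≤ b^5 := by
    have hz : (2:ℤ) ≤ (b:ℤ) := by exact_mod_cast hb
    have : ((b:ℤ)+1)^3 ≤ (b:ℤ)^5 := by nlinarith [sq_nonneg ((b:ℤ)-2), sq_nonneg (b:ℤ), mul_nonneg (mul_nonneg (sub_nonneg.mpr hz) (by positivity : (0:ℤ) ≤ (b:ℤ)^2)) (by positivity : (0:ℤ) ≤ (b:ℤ))]
    exact_mod_cast this
  calc (b+1)^12 = ((b+1)^3)^4 := by ring
    _ ≤ (b^5)^4 := Nat.pow_le_pow_left h3 4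
    _ = b^20 := by ring

end Stmt16

open Stmt16

set_option maxHeartbeats 1000000 in
theorem stmt_16 (m y : ℕ) (hm : Even m) (hy : 16 ≤ y) (hym : y ≤ m / 2) :
    let N : ℕ := m / 2 + y
    let p : ℝ := 2 * y / (m + 2 * y)
    let f : ℕ → ℝ := fun k => (N.choose k : ℝ) * p ^ k * (1 - p) ^ (N - k)
    f y ≤ 2 / (1 + 2 * (⌊(y : ℝ) ^ ((1 : ℝ) / 4)⌋₊ : ℝ))
    ∧ (∑ k ∈ (Finset.range (N + 1)).filter
          (fun k : ℕ => |(k : ℝ) - (y : ℝ)| ≤ (y : ℝ) ^ ((1 : ℝ) / 10)), f k)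
        < 3 * (y : ℝ) ^ (-(3 : ℝ) / 20) := by
  intro N p f
  obtain ⟨c, hc⟩ := hm
  have hc2 : m / 2 = c := by omega
  have hyc : y ≤ c := by omega
  have hy0 : 0 < y := by omega
  have hyR : (16:ℝ) ≤ (y:ℝ) := by exact_mod_cast hy
  have hyR0 : (0:ℝ) < (y:ℝ) := by linarith
  have hcyR : (0:ℝ) < (c:ℝ) + y := by
    have : (0:ℝ) ≤ (c:ℝ) := by positivity
    linarith
  have hN : N = c + y := by show m / 2 + y = c + y; omega
  have hp : p = (y:ℝ)/((c:ℝ)+y) := by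
    show 2 * (y:ℝ) / ((m:ℝ) + 2 * y) = (y:ℝ)/((c:ℝ)+y)
    rw [hc]; push_cast
    have h1 : (c:ℝ)+c+2*y ≠ 0 := by positivity
    have h2 : (c:ℝ)+y ≠ 0 := ne_of_gt hcyR
    field_simp
    ring
  have h1p : 1 - p = (c:ℝ)/((c:ℝ)+y) := by
    rw [hp]; field_simp; ring
  have hf : ∀ k, f k = F c y k := by
    intro k
    show ((N.choose k : ℕ) : ℝ) * p ^ k * (1 - p) ^ (N - k) = F c y k
    rw [h1p, hN, hp]; rfl
  obtain ⟨b, hbdef⟩ : ∃ b', b' = ⌊(y : ℝ) ^ ((1 : ℝ) / 4)⌋₊ := ⟨_, rfl⟩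
  obtain ⟨a, hadef⟩ : ∃ a', a' = ⌊(y : ℝ) ^ ((1 : ℝ) / 10)⌋₊ := ⟨_, rfl⟩
  rw [← hbdef]
  have hrp4 : (0:ℝ) ≤ (y:ℝ) ^ ((1:ℝ)/4) := Real.rpow_nonneg (le_of_lt hyR0) _
  have hb_le : (b:ℝ) ≤ (y:ℝ) ^ ((1:ℝ)/4) := by rw [hbdef]; exact Nat.floor_le hrp4
  have hb_lt : (y:ℝ) ^ ((1:ℝ)/4) < (b:ℝ) + 1 := by rw [hbdef]; exact Nat.lt_floor_add_one _
  have ha_le : (a:ℝ) ≤ (y:ℝ) ^ ((1:ℝ)/10) := by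
    rw [hadef]; exact Nat.floor_le (Real.rpow_nonneg (le_of_lt hyR0) _)
  have hby : b ≤ y := by
    have h1 : (y:ℝ) ^ ((1:ℝ)/4) ≤ (y:ℝ) := by
      calc (y:ℝ) ^ ((1:ℝ)/4) ≤ (y:ℝ) ^ (1:ℝ) :=
            Real.rpow_le_rpow_of_exponent_le (by linarith) (by norm_num)
        _ = y := Real.rpow_one _
    rw [hbdef]
    calc ⌊(y : ℝ) ^ ((1 : ℝ) / 4)⌋₊ ≤ ⌊(y:ℝ)⌋₊ := Nat.floor_le_floor h1
      _ = y := Nat.floor_natCast y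
  have hay : a ≤ y := by
    have h1 : (y:ℝ) ^ ((1:ℝ)/10) ≤ (y:ℝ) := by
      calc (y:ℝ) ^ ((1:ℝ)/10) ≤ (y:ℝ) ^ (1:ℝ) :=
            Real.rpow_le_rpow_of_exponent_le (by linarith) (by norm_num)
        _ = y := Real.rpow_one _
    rw [hadef]
    calc ⌊(y : ℝ) ^ ((1 : ℝ) / 10)⌋₊ ≤ ⌊(y:ℝ)⌋₊ := Nat.floor_le_floor h1
      _ = y := Nat.floor_natCast y
  have h164 : (16:ℝ) ^ ((1:ℝ)/4) = 2 := by
    rw [show (16:ℝ) = 2^(4:ℕ) by norm_num, ← Real.rpow_natCast 2 4,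
      ← Real.rpow_mul (by norm_num)]
    norm_num
  have hb2 : 2 ≤ b := by
    rw [hbdef]
    apply Nat.le_floor
    rw [show ((2:ℕ):ℝ) = 2 by norm_num, ← h164]
    exact Real.rpow_le_rpow (by norm_num) hyR (by norm_num)
  have ha1 : 1 ≤ a := by
    rw [hadef]
    apply Nat.le_floor
    rw [show ((1:ℕ):ℝ) = 1 by norm_num]
    calc (1:ℝ) = (1:ℝ) ^ ((1:ℝ)/10) := (Real.one_rpow _).symm
      _ ≤ (y:ℝ) ^ ((1:ℝ)/10) := Real.rpow_le_rpow (by norm_num) (by linarith) (by norm_num)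
  -- half bound
  have hbR : (b:ℝ) ≤ y := by exact_mod_cast hby
  have ht0 : (0:ℝ) ≤ 1 - (b:ℝ)/y := by
    have h1 : (b:ℝ)/y ≤ 1 := (div_le_one hyR0).mpr hbR
    linarith
  have ht1 : (1 - (b:ℝ)/y)^2 ≤ 1 := by
    have : (b:ℝ)/y ≥ 0 := by positivity
    nlinarith
  have hsqrt : (y:ℝ) ^ ((1:ℝ)/2) * (y:ℝ) ^ ((1:ℝ)/2) = y := by
    rw [← Real.rpow_add hyR0]; norm_num
  have h4s : (4:ℝ) ≤ (y:ℝ) ^ ((1:ℝ)/2) := by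
    have h162 : (16:ℝ) ^ ((1:ℝ)/2) = 4 := by
      rw [show (16:ℝ) = 4^(2:ℕ) by norm_num, ← Real.rpow_natCast 4 2,
        ← Real.rpow_mul (by norm_num)]
      norm_num
    rw [← h162]
    exact Real.rpow_le_rpow (by norm_num) hyR (by norm_num)
  have hb2y : (b:ℝ)^2 ≤ (y:ℝ) ^ ((1:ℝ)/2) := by
    have h1 : ((y:ℝ) ^ ((1:ℝ)/4))^(2:ℕ) = (y:ℝ) ^ ((1:ℝ)/2) := by
      rw [← Real.rpow_natCast ((y:ℝ) ^ ((1:ℝ)/4)) 2, ← Real.rpow_mul (le_of_lt hyR0)]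
      norm_num
    calc (b:ℝ)^2 ≤ ((y:ℝ) ^ ((1:ℝ)/4))^(2:ℕ) := by
          exact pow_le_pow_left₀ (by positivity) hb_le 2
      _ = (y:ℝ) ^ ((1:ℝ)/2) := h1
  have h4b2 : 4 * (b:ℝ)^2 ≤ y := by
    calc 4 * (b:ℝ)^2 ≤ 4 * ((y:ℝ) ^ ((1:ℝ)/2)) := by linarith
      _ ≤ (y:ℝ) ^ ((1:ℝ)/2) * (y:ℝ) ^ ((1:ℝ)/2) := by nlinarith [Real.rpow_nonneg (le_of_lt hyR0) ((1:ℝ)/2)]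
      _ = y := hsqrt
  have hhalf : (1:ℝ)/2 ≤ ((1 - (b:ℝ)/y)^2)^b := by
    rw [← pow_mul]
    have hbern := one_add_mul_le_pow (a := -((b:ℝ)/y)) (by
      have : (b:ℝ)/y ≤ 1 := by rw [div_le_one hyR0]; exact hbR
      linarith) (2*b)
    have h2 : (1:ℝ) + (2*b : ℕ) * (-((b:ℝ)/y)) = 1 - 2*(b:ℝ)^2/y := by
      push_cast; ring
    rw [h2] at hbern
    have h3 : (1:ℝ)/2 ≤ 1 - 2*(b:ℝ)^2/y := by
      have h4 : 2*(b:ℝ)^2/y ≤ 1/2 := by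
        rw [div_le_iff₀ hyR0]; linarith [h4b2]
      linarith
    calc (1:ℝ)/2 ≤ 1 - 2*(b:ℝ)^2/y := h3
      _ ≤ (1 + -((b:ℝ)/y))^(2*b) := hbern
      _ = (1 - (b:ℝ)/y)^(2*b) := by ring_nf
  -- lower bounds near the mode
  set r : ℝ := (1 - (b:ℝ)/y)^2 with hrdef
  have hr0 : 0 ≤ r := by positivity
  have up : ∀ j, j ≤ b → r^j * F c y y ≤ F c y (y+j) := by
    intro j
    induction j with
    | zero => intro _; simp
    | succ n ih =>
      intro hn
      have h1 := ih (by omega)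
      calc r^(n+1) * F c y y = r * (r^n * F c y y) := by ring
        _ ≤ r * F c y (y+n) := mul_le_mul_of_nonneg_left h1 hr0
        _ ≤ F c y (y+n+1) := ratio_up c y b n hyc hby (by omega)
        _ = F c y (y+(n+1)) := by ring_nf
  have dn : ∀ j, j ≤ b → r^j * F c y y ≤ F c y (y-j) := by
    intro j
    induction j with
    | zero => intro _; simp
    | succ n ih =>
      intro hn
      have h1 := ih (by omega)
      calc r^(n+1) * F c y y = r * (r^n * F c y y) := by ring
        _ ≤ r * F c y (y-n) := mul_le_mul_of_nonneg_left h1 hr0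
        _ ≤ F c y (y-(n+1)) := ratio_down c y b n hyc hby (by omega)
  have near : ∀ k ∈ Icc (y-b) (y+b), (1:ℝ)/2 * F c y y ≤ F c y k := by
    intro k hk
    rw [mem_Icc] at hk
    have hFy := F_nonneg c y y
    have hstep : ∀ j, j ≤ b → (1:ℝ)/2 * F c y y ≤ r^j * F c y y := by
      intro j hj
      have : r^b ≤ r^j := pow_le_pow_of_le_one hr0 ht1 hj
      nlinarith [hhalf]
    rcases le_or_gt y k with h | h
    · have h1 : k = y + (k - y) := by omega
      have h2 : k - y ≤ b := by omega
      rw [h1]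
      exact le_trans (hstep _ h2) (up _ h2)
    · have h1 : k = y - (y - k) := by omega
      have h2 : y - k ≤ b := by omega
      rw [h1]
      exact le_trans (hstep _ h2) (dn _ h2)
  -- part 1
  have hsub : Icc (y-b) (y+b) ⊆ range (c+y+1) := by
    intro k hk
    rw [mem_Icc] at hk
    rw [mem_range]
    omega
  have hsum1 : ∑ k ∈ Icc (y-b) (y+b), F c y k ≤ 1 := by
    rw [← F_sum c y hy0]
    exact Finset.sum_le_sum_of_subset_of_nonneg hsub (fun i _ _ => F_nonneg c y i)
  have hcard : (Icc (y-b) (y+b)).card = 2*b+1 := by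
    rw [Nat.card_Icc]; omega
  have hlow := Finset.card_nsmul_le_sum (Icc (y-b) (y+b)) (F c y) ((1:ℝ)/2 * F c y y) near
  rw [hcard] at hlow
  have hlow2 : ((2*b+1 : ℕ):ℝ) * ((1:ℝ)/2 * F c y y) ≤ 1 := by
    calc ((2*b+1 : ℕ):ℝ) * ((1:ℝ)/2 * F c y y) = (2*b+1 : ℕ) • ((1:ℝ)/2 * F c y y) := by
          rw [nsmul_eq_mul]
      _ ≤ ∑ k ∈ Icc (y-b) (y+b), F c y k := hlow
      _ ≤ 1 := hsum1
  have hbpos : (0:ℝ) < 1 + 2*(b:ℝ) := by positivity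
  have part1 : F c y y ≤ 2 / (1 + 2*(b:ℝ)) := by
    rw [le_div_iff₀ hbpos]
    push_cast at hlow2
    nlinarith
  constructor
  · rw [hf y]; exact part1
  -- part 2
  · have hTset : ((Finset.range (N + 1)).filter
        (fun k : ℕ => |(k : ℝ) - (y : ℝ)| ≤ (y : ℝ) ^ ((1 : ℝ) / 10)))
        ⊆ Icc (y-a) (y+a) := by
      intro k hk
      rw [mem_filter] at hk
      obtain ⟨-, habs⟩ := hk
      rw [abs_le] at habs
      obtain ⟨h1, h2⟩ := habs
      have hk1 : k ≤ y + a := by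
        rcases le_or_gt k y with h | h
        · omega
        · have : (k - y : ℕ) ≤ a := by
            rw [hadef]
            apply Nat.le_floor
            rw [Nat.cast_sub (le_of_lt h)]
            linarith
          omega
      have hk2 : y ≤ k + a := by
        rcases le_or_gt y k with h | h
        · omega
        · have : (y - k : ℕ) ≤ a := by
            rw [hadef]
            apply Nat.le_floor
            rw [Nat.cast_sub (le_of_lt h)]
            push_cast
            linarith
          omega
      rw [mem_Icc]; omega
    set T := ((Finset.range (N + 1)).filter
        (fun k : ℕ => |(k : ℝ) - (y : ℝ)| ≤ (y : ℝ) ^ ((1 : ℝ) / 10))) with hTdef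
    have hFy := F_nonneg c y y
    have hsumT : ∑ k ∈ T, f k ≤ ((2*a+1 : ℕ):ℝ) * F c y y := by
      have h1 : ∑ k ∈ T, f k ≤ T.card • F c y y := by
        apply Finset.sum_le_card_nsmul
        intro k _
        rw [hf k]
        exact F_max c y hy0 hyc k
      have h2 : T.card ≤ 2*a+1 := by
        calc T.card ≤ (Icc (y-a) (y+a)).card := Finset.card_le_card hTset
          _ = 2*a+1 := by rw [Nat.card_Icc]; omega
      calc ∑ k ∈ T, f k ≤ T.card • F c y y := h1
        _ = (T.card : ℝ) * F c y y := nsmul_eq_mul _ _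
        _ ≤ ((2*a+1 : ℕ):ℝ) * F c y y := by
            apply mul_le_mul_of_nonneg_right _ hFy
            exact_mod_cast h2
    have hchain : ∑ k ∈ T, f k ≤ (2*(a:ℝ)+1) * (2 / (1 + 2*(b:ℝ))) := by
      calc ∑ k ∈ T, f k ≤ ((2*a+1 : ℕ):ℝ) * F c y y := hsumT
        _ ≤ ((2*a+1 : ℕ):ℝ) * (2 / (1 + 2*(b:ℝ))) := by
            apply mul_le_mul_of_nonneg_left part1 (by positivity)
        _ = (2*(a:ℝ)+1) * (2 / (1 + 2*(b:ℝ))) := by push_cast; ring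
    -- final arithmetic
    have hfinal : (2*(a:ℝ)+1) * (2 / (1 + 2*(b:ℝ))) < 3 * (y:ℝ) ^ (-(3:ℝ)/20) := by
      have hbR2 : (2:ℝ) ≤ (b:ℝ) := by exact_mod_cast hb2
      have hrp4pos : (0:ℝ) < (y:ℝ) ^ ((1:ℝ)/4) := Real.rpow_pos_of_pos hyR0 _
      have hexp : (y:ℝ) ^ (-(3:ℝ)/20) = (y:ℝ) ^ ((1:ℝ)/10) / (y:ℝ) ^ ((1:ℝ)/4) := by
        rw [← Real.rpow_sub hyR0]; norm_num
      rcases eq_or_lt_of_le ha1 with haeq | ha2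
      · -- a = 1
        have haR : (a:ℝ) = 1 := by exact_mod_cast haeq.symm
        have hkey : (y:ℝ) ^ ((3:ℝ)/20) < b := by
          have hy4 : (y:ℝ) < ((b:ℝ)+1)^(4:ℕ) := by
            have h1 : ((y:ℝ) ^ ((1:ℝ)/4))^(4:ℕ) = y := by
              rw [← Real.rpow_natCast ((y:ℝ) ^ ((1:ℝ)/4)) 4, ← Real.rpow_mul (le_of_lt hyR0)]
              norm_num
            calc (y:ℝ) = ((y:ℝ) ^ ((1:ℝ)/4))^(4:ℕ) := h1.symm
              _ < ((b:ℝ)+1)^(4:ℕ) := by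
                  apply pow_lt_pow_left₀ hb_lt (le_of_lt hrp4pos) (by norm_num)
          have hy3 : (y:ℝ)^(3:ℕ) < ((b:ℝ)+1)^(12:ℕ) := by
            calc (y:ℝ)^(3:ℕ) < (((b:ℝ)+1)^(4:ℕ))^(3:ℕ) := by
                  apply pow_lt_pow_left₀ hy4 (le_of_lt hyR0) (by norm_num)
              _ = ((b:ℝ)+1)^(12:ℕ) := by ring
          have hnat : ((b:ℝ)+1)^(12:ℕ) ≤ (b:ℝ)^(20:ℕ) := by
            have := pow312 b hb2
            calc ((b:ℝ)+1)^(12:ℕ) = (((b+1)^12 : ℕ) : ℝ) := by push_cast; ring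
              _ ≤ ((b^20 : ℕ) : ℝ) := by exact_mod_cast this
              _ = (b:ℝ)^(20:ℕ) := by push_cast; ring
          have hy320 : (y:ℝ)^(3:ℕ) < (b:ℝ)^(20:ℕ) := lt_of_lt_of_le hy3 hnat
          have h1 : ((y:ℝ)^(3:ℕ)) ^ ((1:ℝ)/20) = (y:ℝ) ^ ((3:ℝ)/20) := by
            rw [← Real.rpow_natCast (y:ℝ) 3, ← Real.rpow_mul (le_of_lt hyR0)]
            norm_num
          have h2 : ((b:ℝ)^(20:ℕ)) ^ ((1:ℝ)/20) = (b:ℝ) := by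
            rw [← Real.rpow_natCast (b:ℝ) 20, ← Real.rpow_mul (by positivity)]
            norm_num
          calc (y:ℝ) ^ ((3:ℝ)/20) = ((y:ℝ)^(3:ℕ)) ^ ((1:ℝ)/20) := h1.symm
            _ < ((b:ℝ)^(20:ℕ)) ^ ((1:ℝ)/20) :=
                Real.rpow_lt_rpow (by positivity) hy320 (by norm_num)
            _ = (b:ℝ) := h2
        have hrp320pos : (0:ℝ) < (y:ℝ) ^ ((3:ℝ)/20) := Real.rpow_pos_of_pos hyR0 _
        have hexp2 : 3 * (y:ℝ) ^ (-(3:ℝ)/20) = 3 / ((y:ℝ) ^ ((3:ℝ)/20)) := by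
          rw [show (-(3:ℝ)/20) = -((3:ℝ)/20) by norm_num,
            Real.rpow_neg (le_of_lt hyR0)]
          ring
        have h5 : (2*(a:ℝ)+1) * (2 / (1 + 2*(b:ℝ))) = 6/(1+2*(b:ℝ)) := by
          rw [haR]; ring
        rw [h5, hexp2, div_lt_div_iff₀ hbpos hrp320pos]
        nlinarith [hkey, hrp320pos]
      · -- a ≥ 2
        have haR2 : (2:ℝ) ≤ (a:ℝ) := by exact_mod_cast ha2
        have hrp10pos : (0:ℝ) < (y:ℝ) ^ ((1:ℝ)/10) := Real.rpow_pos_of_pos hyR0 _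
        have hstep1 : (a:ℝ)/((b:ℝ)+1) < (y:ℝ) ^ ((1:ℝ)/10) / (y:ℝ) ^ ((1:ℝ)/4) := by
          calc (a:ℝ)/((b:ℝ)+1) ≤ (y:ℝ) ^ ((1:ℝ)/10) / ((b:ℝ)+1) := by gcongr
            _ < (y:ℝ) ^ ((1:ℝ)/10) / (y:ℝ) ^ ((1:ℝ)/4) :=
                div_lt_div_of_pos_left hrp10pos hrp4pos hb_lt
        have hstep2 : (2*(a:ℝ)+1) * (2 / (1 + 2*(b:ℝ))) ≤ 3*((a:ℝ)/((b:ℝ)+1)) := by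
          have e1 : (2*(a:ℝ)+1) * (2 / (1 + 2*(b:ℝ))) = (4*(a:ℝ)+2)/(1+2*(b:ℝ)) := by
            ring
          have e2 : 3*((a:ℝ)/((b:ℝ)+1)) = (3*(a:ℝ))/((b:ℝ)+1) := by ring
          rw [e1, e2, div_le_div_iff₀ hbpos (by positivity)]
          nlinarith [mul_nonneg (sub_nonneg.mpr haR2) (sub_nonneg.mpr hbR2)]
        calc (2*(a:ℝ)+1) * (2 / (1 + 2*(b:ℝ))) ≤ 3*((a:ℝ)/((b:ℝ)+1)) := hstep2
          _ < 3*((y:ℝ) ^ ((1:ℝ)/10) / (y:ℝ) ^ ((1:ℝ)/4)) := by linarith [hstep1]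
          _ = 3 * (y:ℝ) ^ (-(3:ℝ)/20) := by rw [hexp]
    linarith [hchain, hfinal]
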